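/- Let ν ≥ 0 be real and let b_ν(x) = ∑_{k=0}^∞ [Γ(ν+k+1)/Γ(2ν+k+1)] x^k/k!. Then for every complex x ≠ 0 (with a fixed branch of x^{1/2-ν}), b_ν(x) = (√π/2) · x^{1/2-ν} e^{x/2} [I_{ν-1/2}(x/2) + I_{ν+1/2}(x/2)], where I_μ(z) = ∑_{k=0}^∞ (z/2)^{2k+μ}/(k! Γ(k+μ+1)) is the modified Bessel function of the first kind. -/

import Mathlib

/-- The modified Bessel function of the first kind of (real) order `μ`,
defined by its power series `I_μ(z) = ∑_{k} (z/2)^(2k+μ) / (k! Γ(k+μ+1))`,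
with the principal branch of the complex power. -/
noncomputable def besselI (μ : ℝ) (z : ℂ) : ℂ :=
  ∑' k : ℕ, (z / 2) ^ (2 * (k : ℂ) + (μ : ℂ)) /
    ((k.factorial : ℂ) * Complex.Gamma ((k : ℂ) + (μ : ℂ) + 1))

/-- The auxiliary entire function `b_ν(x) = ∑_k [Γ(ν+k+1)/Γ(2ν+k+1)] x^k/k!`. -/
noncomputable def bFun (ν : ℝ) (x : ℂ) : ℂ :=
  ∑' k : ℕ, ((Real.Gamma (ν + k + 1) / Real.Gamma (2 * ν + k + 1) : ℝ) : ℂ) *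
    x ^ k / (k.factorial : ℂ)

open Finset

namespace BFunAux

/-- Coefficients of `e^{-x/2} b_ν(x)`. -/
noncomputable def bA (ν : ℝ) (n : ℕ) : ℝ :=
  Real.sqrt Real.pi * (4 : ℝ) ^ (-ν) / 4 ^ n /
    ((n / 2).factorial * Real.Gamma ((n - n / 2 : ℕ) + ν + 1 / 2))

/-- Coefficients of `e^{x/2}`. -/
noncomputable def eC (m : ℕ) : ℝ := 1 / (2 ^ m * m.factorial)

/-- Cauchy product coefficients. -/
noncomputable def cC (ν : ℝ) (n : ℕ) : ℝ := ∑ j ∈ range (n + 1), eC (n - j) * bA ν j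

/-- Coefficients of `b_ν`. -/
noncomputable def tC (ν : ℝ) (n : ℕ) : ℝ :=
  Real.Gamma (ν + n + 1) / (Real.Gamma (2 * ν + n + 1) * n.factorial)

lemma bA_even (ν : ℝ) (k : ℕ) : bA ν (2 * k) =
    Real.sqrt Real.pi * (4 : ℝ) ^ (-ν) / 4 ^ (2 * k) /
      (k.factorial * Real.Gamma (k + ν + 1 / 2)) := by
  rw [bA, show 2 * k / 2 = k by omega, show 2 * k - k = k by omega]

lemma bA_odd (ν : ℝ) (k : ℕ) : bA ν (2 * k + 1) =
    Real.sqrt Real.pi * (4 : ℝ) ^ (-ν) / 4 ^ (2 * k + 1) /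
      (k.factorial * Real.Gamma ((k + 1 : ℝ) + ν + 1 / 2)) := by
  rw [bA, show (2 * k + 1) / 2 = k by omega, show 2 * k + 1 - k = k + 1 by omega]
  push_cast
  ring_nf

lemma eC_succ (k : ℕ) : eC (k + 1) * (2 * ((k : ℝ) + 1)) = eC k := by
  rw [eC, eC, Nat.factorial_succ]
  have h1 : (2 : ℝ) ^ (k + 1) = 2 * 2 ^ k := by ring
  have h2 : ((k + 1) * k.factorial : ℕ) = (((k : ℝ) + 1) * k.factorial : ℝ) := by push_cast; ring
  rw [h1, h2]
  have hk : (k.factorial : ℝ) ≠ 0 := Nat.cast_ne_zero.mpr k.factorial_ne_zero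
  field_simp

variable {ν : ℝ} (hν : 0 ≤ ν)

section
include hν

lemma gamma_half_pos (k : ℕ) : 0 < Real.Gamma ((k : ℝ) + ν + 1 / 2) :=
  Real.Gamma_pos_of_pos (by positivity)

lemma rec_A1 : (2 * ν + 1) * bA ν 1 = bA ν 0 / 2 := by
  have h0 := bA_even ν 0
  have h1 := bA_odd ν 0
  norm_num at h0 h1
  rw [h0, h1]
  have hg : Real.Gamma (1 + ν + 1 / 2) = (ν + 1 / 2) * Real.Gamma (ν + 1 / 2) := by
    rw [show (1 : ℝ) + ν + 1 / 2 = (ν + 1 / 2) + 1 by ring,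
      Real.Gamma_add_one (by positivity)]
  rw [hg]
  have hΓ : Real.Gamma (ν + 1 / 2) ≠ 0 := by
    have := Real.Gamma_pos_of_pos (show (0:ℝ) < ν + 1/2 by positivity); linarith
  have hν2 : (ν + 1 / 2) ≠ 0 := by positivity
  field_simp
  ring

lemma rec_A2 (m : ℕ) : ((m : ℝ) + 2) * (2 * ν + m + 2) * bA ν (m + 2) =
    bA ν (m + 1) / 2 + bA ν m / 4 := by
  have hΓpos := gamma_half_pos hν
  rcases Nat.even_or_odd m with ⟨k, hk⟩ | ⟨k, hk⟩
  · subst hk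
    rw [show k + k + 2 = 2 * (k + 1) by ring, show k + k + 1 = 2 * k + 1 by ring,
      show k + k = 2 * k by ring, bA_even, bA_odd, bA_even]
    have hg1 : Real.Gamma ((k : ℝ) + 1 + ν + 1 / 2) =
        ((k : ℝ) + ν + 1 / 2) * Real.Gamma ((k : ℝ) + ν + 1 / 2) := by
      rw [show (k : ℝ) + 1 + ν + 1 / 2 = ((k : ℝ) + ν + 1 / 2) + 1 by ring,
        Real.Gamma_add_one (by positivity)]
    rw [show ((k:ℕ) + 1 : ℕ) = (k+1 : ℕ) from rfl, Nat.factorial_succ]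
    push_cast [hg1]
    have hΓ : Real.Gamma ((k : ℝ) + ν + 1 / 2) ≠ 0 := ne_of_gt (hΓpos k)
    have h1 : ((k : ℝ) + ν + 1 / 2) ≠ 0 := by positivity
    have h2 : (k.factorial : ℝ) ≠ 0 := Nat.cast_ne_zero.mpr k.factorial_ne_zero
    have h3 : (4 : ℝ) ^ (2 * (k + 1)) = 16 * 4 ^ (2 * k) := by ring
    have h4 : (4 : ℝ) ^ (2 * k + 1) = 4 * 4 ^ (2 * k) := by ring
    rw [h3, h4]
    have h5 : (4 : ℝ) ^ (2 * k) ≠ 0 := by positivity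
    field_simp
    ring
  · subst hk
    rw [show 2 * k + 1 + 2 = 2 * (k + 1) + 1 by ring, show 2 * k + 1 + 1 = 2 * (k + 1) by ring,
      bA_odd, bA_even, bA_odd]
    have hg1 : Real.Gamma ((k : ℝ) + 1 + ν + 1 / 2) =
        ((k : ℝ) + ν + 1 / 2) * Real.Gamma ((k : ℝ) + ν + 1 / 2) := by
      rw [show (k : ℝ) + 1 + ν + 1 / 2 = ((k : ℝ) + ν + 1 / 2) + 1 by ring,
        Real.Gamma_add_one (by positivity)]
    have hg2 : Real.Gamma (((k:ℕ) + 1 : ℕ) + 1 + ν + 1 / 2) =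
        ((k : ℝ) + 1 + ν + 1 / 2) * Real.Gamma ((k : ℝ) + 1 + ν + 1 / 2) := by
      push_cast
      rw [show (k : ℝ) + 1 + 1 + ν + 1 / 2 = ((k : ℝ) + 1 + ν + 1 / 2) + 1 by ring,
        Real.Gamma_add_one (by positivity)]
    push_cast at hg2
    push_cast [hg2, hg1, Nat.factorial_succ]
    have hΓ : Real.Gamma ((k : ℝ) + ν + 1 / 2) ≠ 0 := ne_of_gt (hΓpos k)
    have h1 : ((k : ℝ) + ν + 1 / 2) ≠ 0 := by positivity
    have h1' : ((k : ℝ) + 1 + ν + 1 / 2) ≠ 0 := by positivity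
    have h2 : (k.factorial : ℝ) ≠ 0 := Nat.cast_ne_zero.mpr k.factorial_ne_zero
    have h3 : (4 : ℝ) ^ (2 * (k + 1) + 1) = 64 * 4 ^ (2 * k) := by ring
    have h4 : (4 : ℝ) ^ (2 * (k + 1)) = 16 * 4 ^ (2 * k) := by ring
    have h4' : (4 : ℝ) ^ (2 * k + 1) = 4 * 4 ^ (2 * k) := by ring
    rw [h3, h4, h4']
    have h5 : (4 : ℝ) ^ (2 * k) ≠ 0 := by positivity
    field_simp
    ring

lemma L3 (n : ℕ) :
    ∑ m ∈ range (n + 2), (m : ℝ) * (2 * ν + m) * (eC (n + 1 - m) * bA ν m)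
      = (∑ m ∈ range (n + 1), eC (n - m) * bA ν m / 2)
        + ∑ m ∈ range n, eC (n - 1 - m) * bA ν m / 4 := by
  rw [Finset.sum_range_succ', Finset.sum_range_succ', Finset.sum_range_succ']
  have hterm : ∀ i ∈ range n,
      ((i + 1 + 1 : ℕ) : ℝ) * (2 * ν + (i + 1 + 1 : ℕ)) * (eC (n + 1 - (i + 1 + 1)) * bA ν (i + 1 + 1))
        = eC (n - 1 - i) * bA ν (i + 1) / 2 + eC (n - 1 - i) * bA ν i / 4 := by
    intro i _
    rw [show n + 1 - (i + 1 + 1) = n - 1 - i by omega]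
    have h := rec_A2 hν i
    push_cast
    linear_combination eC (n - 1 - i) * h
  rw [Finset.sum_congr rfl hterm, Finset.sum_add_distrib]
  have hterm2 : ∀ i ∈ range n,
      eC (n - (i + 1)) * bA ν (i + 1) / 2 = eC (n - 1 - i) * bA ν (i + 1) / 2 := by
    intro i _
    rw [show n - (i + 1) = n - 1 - i by omega]
  rw [Finset.sum_congr rfl hterm2]
  have h1 : ((0 + 1 : ℕ) : ℝ) * (2 * ν + (0 + 1 : ℕ)) * (eC (n + 1 - (0 + 1)) * bA ν (0 + 1))
      = eC (n - 0) * bA ν 0 / 2 := by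
    rw [show n + 1 - (0 + 1) = n by omega, show n - 0 = n by omega]
    have h := rec_A1 hν
    push_cast
    linear_combination eC n * h
  rw [h1]
  simp
  ring

end

lemma L4 (n : ℕ) :
    ∑ m ∈ range (n + 1), ((n : ℝ) - m) / 2 * (eC (n - m) * bA ν m)
      = ∑ m ∈ range n, eC (n - 1 - m) * bA ν m / 4 := by
  rw [Finset.sum_range_succ]
  rw [sub_self, zero_div, zero_mul, add_zero]
  refine Finset.sum_congr rfl fun m hm => ?_
  have hmn : m < n := mem_range.mp hm
  rw [show n - m = (n - 1 - m) + 1 by omega]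
  have he := eC_succ (n - 1 - m)
  have hc : ((n - 1 - m : ℕ) : ℝ) = (n : ℝ) - 1 - m := by
    rw [Nat.cast_sub (by omega), Nat.cast_sub (by omega)]
    norm_num
  rw [hc] at he
  linear_combination (bA ν m / 4) * he

lemma key (n m : ℕ) (hm : m ≤ n) :
    ((n : ℝ) + 1) * (2 * ν + n + 1) * (eC (n + 1 - m) * bA ν m)
      = (m : ℝ) * (2 * ν + m) * (eC (n + 1 - m) * bA ν m)
        + (2 * ν + (n : ℝ) + 1 + m) / 2 * (eC (n - m) * bA ν m) := by
  rw [show n + 1 - m = (n - m) + 1 by omega]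
  have he := eC_succ (n - m)
  have hc : ((n - m : ℕ) : ℝ) = (n : ℝ) - m := by rw [Nat.cast_sub hm]
  rw [hc] at he
  linear_combination ((2 * ν + (n : ℝ) + 1 + m) / 2 * bA ν m) * he

section
include hν

lemma rec_C (n : ℕ) : ((n : ℝ) + 1) * (2 * ν + n + 1) * cC ν (n + 1)
    = (ν + n + 1) * cC ν n := by
  rw [cC, cC, Finset.mul_sum, Finset.mul_sum]
  calc
    ∑ m ∈ range (n + 1 + 1), ((n : ℝ) + 1) * (2 * ν + n + 1) * (eC (n + 1 - m) * bA ν m)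
        = (∑ m ∈ range (n + 1), ((m : ℝ) * (2 * ν + m) * (eC (n + 1 - m) * bA ν m)
            + (2 * ν + (n : ℝ) + 1 + m) / 2 * (eC (n - m) * bA ν m)))
          + ((n : ℝ) + 1) * (2 * ν + n + 1) * (eC (n + 1 - (n + 1)) * bA ν (n + 1)) := by
        rw [Finset.sum_range_succ]
        congr 1
        refine Finset.sum_congr rfl fun m hm => ?_
        exact key n m (by have := mem_range.mp hm; omega)
    _ = (∑ m ∈ range (n + 2), (m : ℝ) * (2 * ν + m) * (eC (n + 1 - m) * bA ν m))
          + ∑ m ∈ range (n + 1), (2 * ν + (n : ℝ) + 1 + m) / 2 * (eC (n - m) * bA ν m) := by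
        rw [Finset.sum_add_distrib, Finset.sum_range_succ (n := n + 1)]
        push_cast
        ring
    _ = ((∑ m ∈ range (n + 1), eC (n - m) * bA ν m / 2)
          + ∑ m ∈ range n, eC (n - 1 - m) * bA ν m / 4)
          + ∑ m ∈ range (n + 1), (2 * ν + (n : ℝ) + 1 + m) / 2 * (eC (n - m) * bA ν m) := by
        rw [L3 hν]
    _ = ∑ m ∈ range (n + 1), (ν + (n : ℝ) + 1) * (eC (n - m) * bA ν m) := by
        have merge : ∑ m ∈ range (n + 1), (ν + (n : ℝ) + 1) * (eC (n - m) * bA ν m)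
            - (∑ m ∈ range (n + 1), eC (n - m) * bA ν m / 2)
            - ∑ m ∈ range (n + 1), (2 * ν + (n : ℝ) + 1 + m) / 2 * (eC (n - m) * bA ν m)
            = ∑ m ∈ range (n + 1), ((n : ℝ) - m) / 2 * (eC (n - m) * bA ν m) := by
          rw [← Finset.sum_sub_distrib, ← Finset.sum_sub_distrib]
          refine Finset.sum_congr rfl fun m _ => ?_
          ring
        have l4 := L4 (ν := ν) n
        linarith [merge, l4]

lemma rec_t (n : ℕ) : tC ν (n + 1) * (((n : ℝ) + 1) * (2 * ν + n + 1))
    = tC ν n * (ν + n + 1) := by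
  have e1 : Real.Gamma (ν + ((n : ℝ) + 1) + 1) = (ν + (n : ℝ) + 1) * Real.Gamma (ν + (n : ℝ) + 1) := by
    rw [show ν + ((n : ℝ) + 1) + 1 = (ν + (n : ℝ) + 1) + 1 by ring]
    exact Real.Gamma_add_one (by positivity)
  have e2 : Real.Gamma (2 * ν + ((n : ℝ) + 1) + 1)
      = (2 * ν + (n : ℝ) + 1) * Real.Gamma (2 * ν + (n : ℝ) + 1) := by
    rw [show 2 * ν + ((n : ℝ) + 1) + 1 = (2 * ν + (n : ℝ) + 1) + 1 by ring]
    exact Real.Gamma_add_one (by positivity)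
  rw [tC, tC]
  push_cast
  rw [e1, e2, Nat.factorial_succ]
  have h1 : Real.Gamma (2 * ν + n + 1) ≠ 0 :=
    ne_of_gt (Real.Gamma_pos_of_pos (by positivity))
  have h2 : (2 * ν + (n : ℝ) + 1) ≠ 0 := by positivity
  have h3 : (n.factorial : ℝ) ≠ 0 := Nat.cast_ne_zero.mpr n.factorial_ne_zero
  have h4 : ((n : ℝ) + 1) ≠ 0 := by positivity
  push_cast
  field_simp

lemma cC_zero_eq : cC ν 0 = tC ν 0 := by
  rw [cC, tC, Finset.sum_range_one]
  have h0 : bA ν 0 = Real.sqrt Real.pi * (4 : ℝ) ^ (-ν) / Real.Gamma (ν + 1 / 2) := by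
    rw [bA]
    norm_num
  rw [h0, eC]
  norm_num
  have dup := Real.Gamma_mul_Gamma_add_half (ν + 1 / 2)
  rw [show ν + 1 / 2 + 1 / 2 = ν + 1 by ring, show 2 * (ν + 1 / 2) = 2 * ν + 1 by ring] at dup
  have h4 : (4 : ℝ) ^ (-ν) = (2 : ℝ) ^ (1 - 2 * (ν + 1 / 2)) := by
    rw [show (4 : ℝ) = (2 : ℝ) ^ (2 : ℝ) by
        rw [show (2:ℝ) = ((2:ℕ):ℝ) by norm_num, Real.rpow_natCast]; norm_num,
      ← Real.rpow_mul (by norm_num)]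
    ring_nf
  rw [show (1 : ℝ) - (2 * ν + 1) = -(2 * ν) by ring] at dup
  rw [show (1 : ℝ) - 2 * (ν + 1 / 2) = -(2 * ν) by ring] at h4
  have hg1 : Real.Gamma (ν + 1 / 2) ≠ 0 := ne_of_gt (Real.Gamma_pos_of_pos (by positivity))
  have hg2 : Real.Gamma (2 * ν + 1) ≠ 0 := ne_of_gt (Real.Gamma_pos_of_pos (by positivity))
  rw [div_eq_div_iff hg1 hg2, h4]
  linear_combination (-1 : ℝ) * dup

lemma cC_eq_tC : ∀ n, cC ν n = tC ν n := by
  intro n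
  induction n with
  | zero => exact cC_zero_eq hν
  | succ n ih =>
      have h := rec_C hν n
      have ht := rec_t hν n
      have hne : ((n : ℝ) + 1) * (2 * ν + n + 1) ≠ 0 := by positivity
      have h2 : ((n : ℝ) + 1) * (2 * ν + n + 1) * cC ν (n + 1)
          = ((n : ℝ) + 1) * (2 * ν + n + 1) * tC ν (n + 1) := by
        rw [h, ih]; linarith [ht]
      exact mul_left_cancel₀ hne h2

end

lemma Gamma_factorial_le {a : ℝ} (ha : 0 < a) :
    ∀ k : ℕ, Real.Gamma a * (k.factorial * (min a 1) ^ k) ≤ Real.Gamma ((k : ℝ) + a) := by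
  intro k
  induction k with
  | zero => simp
  | succ k ih =>
      have hGpos : 0 < Real.Gamma ((k : ℝ) + a) := Real.Gamma_pos_of_pos (by positivity)
      have hmin : 0 < min a 1 := lt_min ha one_pos
      have h1 : ((k : ℝ) + 1) * min a 1 ≤ (k : ℝ) + a := by
        have h2 : min a 1 ≤ 1 := min_le_right a 1
        have h3 : min a 1 ≤ a := min_le_left a 1
        nlinarith [Nat.cast_nonneg (α := ℝ) k]
      calc Real.Gamma a * ((k + 1).factorial * (min a 1) ^ (k + 1))
          = (Real.Gamma a * (k.factorial * (min a 1) ^ k)) * (((k : ℝ) + 1) * min a 1) := by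
            rw [Nat.factorial_succ]; push_cast; ring
        _ ≤ Real.Gamma ((k : ℝ) + a) * (((k : ℝ) + 1) * min a 1) :=
            mul_le_mul_of_nonneg_right ih (by positivity)
        _ ≤ Real.Gamma ((k : ℝ) + a) * ((k : ℝ) + a) := mul_le_mul_of_nonneg_left h1 hGpos.le
        _ = Real.Gamma (((k : ℕ) + 1 : ℕ) + a) := by
            push_cast
            rw [show (k : ℝ) + 1 + a = ((k : ℝ) + a) + 1 by ring,
              Real.Gamma_add_one (by positivity)]
            ring

lemma summable_pow_div_halfFactorial (y : ℝ) :
    Summable (fun n : ℕ => y ^ n / ((n / 2).factorial : ℝ)) := by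
  apply Summable.even_add_odd
  · apply (Real.summable_pow_div_factorial (y ^ 2)).congr
    intro k
    rw [show 2 * k / 2 = k by omega, ← pow_mul]
  · apply ((Real.summable_pow_div_factorial (y ^ 2)).mul_left y).congr
    intro k
    rw [show (2 * k + 1) / 2 = k by omega, ← pow_mul]
    rw [pow_succ']
    ring

section
include hν

lemma bA_nonneg (n : ℕ) : 0 ≤ bA ν n := by
  have h : 0 < Real.Gamma (((n - n / 2 : ℕ) : ℝ) + ν + 1 / 2) :=
    Real.Gamma_pos_of_pos (by positivity)
  rw [bA]
  positivity

lemma bA_le (n : ℕ) :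
    bA ν n ≤ (Real.sqrt Real.pi * (4 : ℝ) ^ (-ν) / Real.Gamma (ν + 1 / 2))
      * (1 / min (ν + 1 / 2) 1) ^ n / ((n / 2).factorial : ℝ) := by
  set a := ν + 1 / 2 with ha
  set μ := min a 1 with hμ
  have hapos : 0 < a := by rw [ha]; positivity
  have hμpos : 0 < μ := lt_min hapos one_pos
  have hμle : μ ≤ 1 := min_le_right a 1
  set m := n - n / 2 with hm
  have hGa : 0 < Real.Gamma a := Real.Gamma_pos_of_pos hapos
  have hGm : 0 < Real.Gamma ((m : ℝ) + a) := Real.Gamma_pos_of_pos (by positivity)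
  have hkey : Real.Gamma a * μ ^ n ≤ 4 ^ n * Real.Gamma ((m : ℝ) + a) := by
    have h1 : μ ^ n ≤ μ ^ m := pow_le_pow_of_le_one hμpos.le hμle (by omega)
    have h2 : (1 : ℝ) ≤ m.factorial := by exact_mod_cast m.factorial_pos
    have h3 := Gamma_factorial_le hapos m
    have h4 : (1 : ℝ) ≤ 4 ^ n := one_le_pow₀ (by norm_num : (1:ℝ) ≤ 4)
    nlinarith [pow_nonneg hμpos.le n, pow_nonneg hμpos.le m,
      mul_pos hGa (pow_pos hμpos m)]
  have hbA : bA ν n = Real.sqrt Real.pi * (4 : ℝ) ^ (-ν)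
      / (4 ^ n * ((n / 2).factorial * Real.Gamma ((m : ℝ) + a))) := by
    rw [bA, div_div, ha]
    ring_nf
    rw [← hm]; ring
  rw [hbA]
  rw [div_le_div_iff₀ (by positivity) (by positivity : (0:ℝ) < ((n / 2).factorial : ℝ))]
  have hc : 0 ≤ Real.sqrt Real.pi * (4 : ℝ) ^ (-ν) := by positivity
  have expand : (Real.sqrt Real.pi * (4 : ℝ) ^ (-ν) / Real.Gamma a) * (1 / μ) ^ n
      * (4 ^ n * (((n / 2).factorial : ℝ) * Real.Gamma ((m : ℝ) + a)))
      = (Real.sqrt Real.pi * (4 : ℝ) ^ (-ν)) * ((n / 2).factorial : ℝ)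
        * ((4 ^ n * Real.Gamma ((m : ℝ) + a)) / (Real.Gamma a * μ ^ n)) := by
    rw [div_pow, one_pow]
    field_simp
  rw [expand]
  have hGpos' : (0:ℝ) < Real.Gamma a * μ ^ n := by positivity
  have h1 : (1 : ℝ) ≤ (4 ^ n * Real.Gamma ((m : ℝ) + a)) / (Real.Gamma a * μ ^ n) := by
    rw [le_div_iff₀ hGpos']
    linarith [hkey]
  nlinarith [mul_nonneg hc (Nat.cast_nonneg (α := ℝ) (n / 2).factorial)]

lemma summable_bA_norm (x : ℂ) : Summable (fun n : ℕ => ‖(bA ν n : ℂ) * x ^ n‖) := by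
  have hle : ∀ n : ℕ, ‖(bA ν n : ℂ) * x ^ n‖
      ≤ (Real.sqrt Real.pi * (4 : ℝ) ^ (-ν) / Real.Gamma (ν + 1 / 2))
        * (((1 / min (ν + 1 / 2) 1) * ‖x‖) ^ n / ((n / 2).factorial : ℝ)) := by
    intro n
    rw [norm_mul, norm_pow, Complex.norm_real, Real.norm_of_nonneg (bA_nonneg hν n)]
    have := bA_le hν n
    have hx : (0:ℝ) ≤ ‖x‖ ^ n := by positivity
    calc bA ν n * ‖x‖ ^ n
        ≤ ((Real.sqrt Real.pi * (4 : ℝ) ^ (-ν) / Real.Gamma (ν + 1 / 2))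
            * (1 / min (ν + 1 / 2) 1) ^ n / ((n / 2).factorial : ℝ)) * ‖x‖ ^ n :=
          mul_le_mul_of_nonneg_right this hx
      _ = (Real.sqrt Real.pi * (4 : ℝ) ^ (-ν) / Real.Gamma (ν + 1 / 2))
            * (((1 / min (ν + 1 / 2) 1) * ‖x‖) ^ n / ((n / 2).factorial : ℝ)) := by
          rw [mul_pow]; ring
  apply Summable.of_nonneg_of_le (fun n => norm_nonneg _) hle
  exact (summable_pow_div_halfFactorial _).mul_left _

end

lemma cC_reflect (ν : ℝ) (n : ℕ) :
    cC ν n = ∑ k ∈ range (n + 1), eC k * bA ν (n - k) := by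
  rw [cC, ← Finset.sum_range_reflect (fun k => eC k * bA ν (n - k)) (n + 1)]
  refine Finset.sum_congr rfl fun j hj => ?_
  have hj' : j ≤ n := by have := mem_range.mp hj; omega
  simp only [Nat.add_sub_cancel]
  rw [show n - (n - j) = j by omega]

lemma cpow_ofReal_mul {r : ℝ} (hr : 0 < r) {x : ℂ} (hx : x ≠ 0) (c : ℂ) :
    ((r : ℂ) * x) ^ c = (r : ℂ) ^ c * x ^ c := by
  have hr' : (r : ℂ) ≠ 0 := Complex.ofReal_ne_zero.mpr (ne_of_gt hr)
  rw [Complex.cpow_def_of_ne_zero (mul_ne_zero hr' hx),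
    Complex.cpow_def_of_ne_zero hr', Complex.cpow_def_of_ne_zero hx,
    Complex.log_ofReal_mul hr hx, ← Complex.exp_add]
  congr 1
  rw [← Complex.ofReal_log hr.le]
  ring

end BFunAux

set_option maxHeartbeats 1600000 in
/-- For `ν ≥ 0` and any nonzero complex `x` (principal branch of `x^(1/2-ν)`):
`b_ν(x) = (√π/2) x^(1/2-ν) e^(x/2) [I_{ν-1/2}(x/2) + I_{ν+1/2}(x/2)]`. -/
theorem bFun_eq_besselI (ν : ℝ) (hν : 0 ≤ ν) (x : ℂ) (hx : x ≠ 0) :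
    bFun ν x = ((Real.sqrt Real.pi / 2 : ℝ) : ℂ) * x ^ ((1 / 2 - ν : ℝ) : ℂ) *
      Complex.exp (x / 2) *
      (besselI (ν - 1 / 2) (x / 2) + besselI (ν + 1 / 2) (x / 2)) := by
  have hx4 : x / 4 ≠ 0 := div_ne_zero hx (by norm_num)
  -- Bessel series, with the constant complex power factored out
  have hbessel : ∀ μ : ℝ, besselI μ (x / 2)
      = (x / 4) ^ ((μ : ℝ) : ℂ) * ∑' k : ℕ, (x / 4) ^ (2 * k) /
          ((k.factorial : ℂ) * ((Real.Gamma ((k : ℝ) + μ + 1) : ℝ) : ℂ)) := by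
    intro μ
    rw [besselI, ← tsum_mul_left]
    refine tsum_congr fun k => ?_
    have h1 : x / 2 / 2 = x / 4 := by ring
    have h2 : (2 * (k : ℂ) + (μ : ℂ)) = ((μ : ℝ) : ℂ) + ((2 * k : ℕ) : ℂ) := by push_cast; ring
    have h3 : (k : ℂ) + (μ : ℂ) + 1 = (((k : ℝ) + μ + 1 : ℝ) : ℂ) := by push_cast; ring
    rw [h1, h2, Complex.cpow_add _ _ hx4, Complex.cpow_natCast, h3, Complex.Gamma_ofReal,
      mul_div_assoc]
  have hquarter : x / 4 = ((1 / 4 : ℝ) : ℂ) * x := by push_cast; ring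
  -- rpow computations
  have h412 : (4 : ℝ) ^ (1 / 2 : ℝ) = 2 := by
    rw [show (4 : ℝ) = 2 ^ (2 : ℕ) by norm_num, ← Real.rpow_natCast 2 2,
      ← Real.rpow_mul (by norm_num : (0 : ℝ) ≤ 2)]
    norm_num
  have hquarter_rpow : ∀ c : ℝ, (1 / 4 : ℝ) ^ c = (4 : ℝ) ^ (-c) := by
    intro c
    rw [show (1 / 4 : ℝ) = 4⁻¹ by norm_num, Real.inv_rpow (by norm_num),
      ← Real.rpow_neg (by norm_num)]
  have hq1 : (1 / 4 : ℝ) ^ (ν - 1 / 2) = 2 * (4 : ℝ) ^ (-ν) := by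
    rw [hquarter_rpow, show -(ν - 1 / 2) = 1 / 2 + -ν by ring,
      Real.rpow_add (by norm_num), h412]
  have hhalf : (4 : ℝ) ^ (-(1 / 2) : ℝ) = 1 / 2 := by
    rw [Real.rpow_neg (by norm_num), h412]
    norm_num
  have hq2 : (1 / 4 : ℝ) ^ (ν + 1 / 2) = (4 : ℝ) ^ (-ν) / 2 := by
    rw [hquarter_rpow, show -(ν + 1 / 2) = -ν + -(1 / 2) by ring,
      Real.rpow_add (by norm_num), hhalf]
    ring
  -- prefactor collapses
  have hpre1 : x ^ ((1 / 2 - ν : ℝ) : ℂ) * (x / 4) ^ (((ν - 1 / 2 : ℝ)) : ℂ)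
      = ((2 * (4 : ℝ) ^ (-ν) : ℝ) : ℂ) := by
    rw [hquarter, BFunAux.cpow_ofReal_mul (by norm_num) hx,
      ← Complex.ofReal_cpow (by norm_num : (0 : ℝ) ≤ 1 / 4), hq1]
    have hxx : x ^ ((1 / 2 - ν : ℝ) : ℂ) * x ^ (((ν - 1 / 2 : ℝ)) : ℂ) = 1 := by
      rw [← Complex.cpow_add _ _ hx,
        show ((1 / 2 - ν : ℝ) : ℂ) + ((ν - 1 / 2 : ℝ) : ℂ) = 0 by push_cast; ring,
        Complex.cpow_zero]
    calc x ^ ((1 / 2 - ν : ℝ) : ℂ) * (((2 * (4 : ℝ) ^ (-ν) : ℝ) : ℂ) * x ^ (((ν - 1 / 2 : ℝ)) : ℂ))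
        = (x ^ ((1 / 2 - ν : ℝ) : ℂ) * x ^ (((ν - 1 / 2 : ℝ)) : ℂ))
            * ((2 * (4 : ℝ) ^ (-ν) : ℝ) : ℂ) := by ring
      _ = ((2 * (4 : ℝ) ^ (-ν) : ℝ) : ℂ) := by rw [hxx]; ring
  have hpre2 : x ^ ((1 / 2 - ν : ℝ) : ℂ) * (x / 4) ^ (((ν + 1 / 2 : ℝ)) : ℂ)
      = (((4 : ℝ) ^ (-ν) / 2 : ℝ) : ℂ) * x := by
    rw [hquarter, BFunAux.cpow_ofReal_mul (by norm_num) hx,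
      ← Complex.ofReal_cpow (by norm_num : (0 : ℝ) ≤ 1 / 4), hq2]
    have hxx : x ^ ((1 / 2 - ν : ℝ) : ℂ) * x ^ (((ν + 1 / 2 : ℝ)) : ℂ) = x := by
      rw [← Complex.cpow_add _ _ hx,
        show ((1 / 2 - ν : ℝ) : ℂ) + ((ν + 1 / 2 : ℝ) : ℂ) = 1 by push_cast; ring,
        Complex.cpow_one]
    calc x ^ ((1 / 2 - ν : ℝ) : ℂ) * ((((4 : ℝ) ^ (-ν) / 2 : ℝ) : ℂ) * x ^ (((ν + 1 / 2 : ℝ)) : ℂ))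
        = (x ^ ((1 / 2 - ν : ℝ) : ℂ) * x ^ (((ν + 1 / 2 : ℝ)) : ℂ))
            * (((4 : ℝ) ^ (-ν) / 2 : ℝ) : ℂ) := by ring
      _ = (((4 : ℝ) ^ (-ν) / 2 : ℝ) : ℂ) * x := by rw [hxx]; ring
  -- identification of the even part
  have heven : ((Real.sqrt Real.pi / 2 : ℝ) : ℂ)
        * (x ^ ((1 / 2 - ν : ℝ) : ℂ) * besselI (ν - 1 / 2) (x / 2))
      = ∑' k : ℕ, ((BFunAux.bA ν (2 * k) : ℝ) : ℂ) * x ^ (2 * k) := by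
    rw [hbessel (ν - 1 / 2), ← mul_assoc (x ^ ((1 / 2 - ν : ℝ) : ℂ)), hpre1, ← tsum_mul_left,
      ← tsum_mul_left]
    refine tsum_congr fun k => ?_
    rw [show (k : ℝ) + (ν - 1 / 2) + 1 = (k : ℝ) + ν + 1 / 2 by ring, BFunAux.bA_even, div_pow]
    have hΓ : Real.Gamma ((k : ℝ) + ν + 1 / 2) ≠ 0 :=
      ne_of_gt (Real.Gamma_pos_of_pos (by positivity))
    have hfk : ((k.factorial : ℂ)) ≠ 0 := Nat.cast_ne_zero.mpr k.factorial_ne_zero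
    have h4k : ((4 : ℂ)) ^ (2 * k) ≠ 0 := pow_ne_zero _ (by norm_num)
    have hΓ' : ((Real.Gamma ((k : ℝ) + ν + 1 / 2) : ℝ) : ℂ) ≠ 0 := Complex.ofReal_ne_zero.mpr hΓ
    push_cast
    ring
  -- identification of the odd part
  have hodd : ((Real.sqrt Real.pi / 2 : ℝ) : ℂ)
        * (x ^ ((1 / 2 - ν : ℝ) : ℂ) * besselI (ν + 1 / 2) (x / 2))
      = ∑' k : ℕ, ((BFunAux.bA ν (2 * k + 1) : ℝ) : ℂ) * x ^ (2 * k + 1) := by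
    rw [hbessel (ν + 1 / 2), ← mul_assoc (x ^ ((1 / 2 - ν : ℝ) : ℂ)), hpre2, ← tsum_mul_left,
      ← tsum_mul_left]
    refine tsum_congr fun k => ?_
    rw [show (k : ℝ) + (ν + 1 / 2) + 1 = ((k : ℝ) + 1) + ν + 1 / 2 by ring, BFunAux.bA_odd,
      div_pow]
    have hΓ : Real.Gamma (((k : ℝ) + 1) + ν + 1 / 2) ≠ 0 :=
      ne_of_gt (Real.Gamma_pos_of_pos (by positivity))
    have hfk : ((k.factorial : ℂ)) ≠ 0 := Nat.cast_ne_zero.mpr k.factorial_ne_zero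
    have h4k : ((4 : ℂ)) ^ (2 * k) ≠ 0 := pow_ne_zero _ (by norm_num)
    have hΓ' : ((Real.Gamma (((k : ℝ) + 1) + ν + 1 / 2) : ℝ) : ℂ) ≠ 0 :=
      Complex.ofReal_ne_zero.mpr hΓ
    push_cast
    ring
  -- summability and even/odd split
  have hAnorm := BFunAux.summable_bA_norm hν x
  have hsumf : Summable (fun n : ℕ => ((BFunAux.bA ν n : ℝ) : ℂ) * x ^ n) := hAnorm.of_norm
  have hinj2 : Function.Injective (fun k : ℕ => 2 * k) := fun a b h => by
    simpa using h
  have hinj2' : Function.Injective (fun k : ℕ => 2 * k + 1) := fun a b h => by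
    simpa using h
  have he2 : Summable (fun k : ℕ => ((BFunAux.bA ν (2 * k) : ℝ) : ℂ) * x ^ (2 * k)) := by
    exact hsumf.comp_injective hinj2
  have ho2 : Summable (fun k : ℕ => ((BFunAux.bA ν (2 * k + 1) : ℝ) : ℂ) * x ^ (2 * k + 1)) := by
    exact hsumf.comp_injective hinj2'
  have hsplit : (∑' k : ℕ, ((BFunAux.bA ν (2 * k) : ℝ) : ℂ) * x ^ (2 * k))
        + (∑' k : ℕ, ((BFunAux.bA ν (2 * k + 1) : ℝ) : ℂ) * x ^ (2 * k + 1))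
      = ∑' n : ℕ, ((BFunAux.bA ν n : ℝ) : ℂ) * x ^ n :=
    tsum_even_add_odd (f := fun n : ℕ => ((BFunAux.bA ν n : ℝ) : ℂ) * x ^ n) he2 ho2
  -- exponential series
  have hexp : Complex.exp (x / 2) = ∑' n : ℕ, (x / 2) ^ n / (n.factorial : ℂ) := by
    rw [Complex.exp_eq_exp_ℂ, NormedSpace.exp_eq_tsum_div]
  have hexp_norm : Summable fun n : ℕ => ‖(x / 2) ^ n / (n.factorial : ℂ)‖ := by
    refine ((Real.summable_pow_div_factorial ‖x / 2‖).congr fun n => ?_)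
    simp [norm_div]
  have hcauchy := tsum_mul_tsum_eq_tsum_sum_range_of_summable_norm hexp_norm hAnorm
  -- inner Cauchy sums
  have hinner : ∀ n : ℕ, ∑ k ∈ range (n + 1),
        (x / 2) ^ k / (k.factorial : ℂ) * (((BFunAux.bA ν (n - k) : ℝ) : ℂ) * x ^ (n - k))
      = ((BFunAux.cC ν n : ℝ) : ℂ) * x ^ n := by
    intro n
    have step1 : ∀ k ∈ range (n + 1),
        (x / 2) ^ k / (k.factorial : ℂ) * (((BFunAux.bA ν (n - k) : ℝ) : ℂ) * x ^ (n - k))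
          = ((BFunAux.eC k * BFunAux.bA ν (n - k) : ℝ) : ℂ) * x ^ n := by
      intro k hk
      have hkn : k ≤ n := by have := mem_range.mp hk; omega
      rw [div_pow, BFunAux.eC]
      have h2k : ((2 : ℂ)) ^ k ≠ 0 := pow_ne_zero _ (by norm_num)
      have hfk : ((k.factorial : ℂ)) ≠ 0 := Nat.cast_ne_zero.mpr k.factorial_ne_zero
      push_cast
      rw [show (x ^ n : ℂ) = x ^ k * x ^ (n - k) by
        rw [← pow_add x k (n - k), show k + (n - k) = n by omega]]
      ring
    rw [Finset.sum_congr rfl step1, BFunAux.cC_reflect]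
    push_cast
    rw [Finset.sum_mul]
  -- main chain
  calc bFun ν x
      = ∑' n : ℕ, ((BFunAux.tC ν n : ℝ) : ℂ) * x ^ n := by
        rw [bFun]
        refine tsum_congr fun n => ?_
        rw [BFunAux.tC]
        push_cast
        ring
    _ = ∑' n : ℕ, ((BFunAux.cC ν n : ℝ) : ℂ) * x ^ n := by
        refine tsum_congr fun n => ?_
        rw [BFunAux.cC_eq_tC hν n]
    _ = ∑' n : ℕ, ∑ k ∈ range (n + 1),
          (x / 2) ^ k / (k.factorial : ℂ) * (((BFunAux.bA ν (n - k) : ℝ) : ℂ) * x ^ (n - k)) := by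
        refine tsum_congr fun n => (hinner n).symm
    _ = (∑' n : ℕ, (x / 2) ^ n / (n.factorial : ℂ))
          * ∑' n : ℕ, ((BFunAux.bA ν n : ℝ) : ℂ) * x ^ n := hcauchy.symm
    _ = Complex.exp (x / 2) * ∑' n : ℕ, ((BFunAux.bA ν n : ℝ) : ℂ) * x ^ n := by rw [← hexp]
    _ = Complex.exp (x / 2)
          * ((∑' k : ℕ, ((BFunAux.bA ν (2 * k) : ℝ) : ℂ) * x ^ (2 * k))
            + ∑' k : ℕ, ((BFunAux.bA ν (2 * k + 1) : ℝ) : ℂ) * x ^ (2 * k + 1)) := by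
        rw [hsplit]
    _ = ((Real.sqrt Real.pi / 2 : ℝ) : ℂ) * x ^ ((1 / 2 - ν : ℝ) : ℂ) *
          Complex.exp (x / 2) *
          (besselI (ν - 1 / 2) (x / 2) + besselI (ν + 1 / 2) (x / 2)) := by
        rw [← heven, ← hodd]
        ring
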